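/- Let k ≥ 1 and n ≥ 2k. Then the algebra End_{ℂ[S_n]}(Sym^k V_n) of ℂ[S_n]-module endomorphisms of Sym^k V_n has dimension dim_ℂ End_{ℂ[S_n]}(Sym^k V_n) = bp_k, the number of bipartite partitions of k. -/

import Mathlib

open Equiv MulAction

namespace SP

/-- The action of `Perm (Fin n)` on size-`k` multisets over `Fin n`
(the multisets index the monomial basis of `Sym^k V_n`). -/
instance symAction (n k : ℕ) : MulAction (Equiv.Perm (Fin n)) (Sym (Fin n) k) where
  smul σ s := ⟨s.1.map σ, by rw [Multiset.card_map]; exact s.2⟩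
  one_smul s := Subtype.ext (by show s.1.map _ = s.1; simp)
  mul_smul σ τ s := Subtype.ext (by
    show s.1.map _ = (s.1.map _).map _
    simp [Multiset.map_map, Function.comp_def])

/-- `b` is a bipartite partition of `k`: a multiset of pairs of nonnegative integers,
none equal to `(0,0)`, whose first coordinates sum to `k` and whose second coordinates
sum to `k`. -/
def IsBiPar (k : ℕ) (b : Multiset (ℕ × ℕ)) : Prop :=
  (0, 0) ∉ b ∧ (b.map Prod.fst).sum = k ∧ (b.map Prod.snd).sum = k

/-- `bp k` is the number of bipartite partitions of `k`. -/
noncomputable def bp (k : ℕ) : ℕ := Nat.card {b : Multiset (ℕ × ℕ) // IsBiPar k b}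

section PartA

variable (G X : Type) [Group G] [Fintype X] [MulAction G X]

noncomputable def mat (φ : Rep.ofMulAction ℂ G X ⟶ Rep.ofMulAction ℂ G X) (x y : X) : ℂ :=
  (φ.hom (MonoidAlgebra.single x 1)).coeff y

theorem mat_equiv (φ : Rep.ofMulAction ℂ G X ⟶ Rep.ofMulAction ℂ G X) (g : G) (x y : X) :
    mat G X φ (g • x) (g • y) = mat G X φ x y := by
  unfold mat
  have h1 : ((Rep.ofMulAction ℂ G X).ρ g) (MonoidAlgebra.single x 1)
      = MonoidAlgebra.single (g • x) 1 :=
    Representation.ofMulAction_single g x 1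
  have h2 := Rep.hom_comm_apply φ g (MonoidAlgebra.single x (1 : ℂ))
  rw [h1] at h2
  rw [h2]
  show (Representation.ofMulAction ℂ G X g (φ.hom (MonoidAlgebra.single x 1))).coeff (g • y) = _
  rw [Representation.ofMulAction_apply, inv_smul_smul]

noncomputable def E : (Rep.ofMulAction ℂ G X ⟶ Rep.ofMulAction ℂ G X) →ₗ[ℂ]
    (orbitRel.Quotient G (X × X) → ℂ) where
  toFun φ := Quotient.lift (fun p : X × X => mat G X φ p.1 p.2) (by
    intro p q h
    obtain ⟨g, rfl⟩ := h
    obtain ⟨x, y⟩ := q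
    exact mat_equiv G X φ g x y)
  map_add' φ ψ := by
    funext q
    induction q using Quotient.inductionOn with
    | h p =>
      show mat G X (φ + ψ) p.1 p.2 = mat G X φ p.1 p.2 + mat G X ψ p.1 p.2
      unfold mat
      rw [Rep.add_hom]
      rfl
  map_smul' c φ := by
    funext q
    induction q using Quotient.inductionOn with
    | h p =>
      show mat G X (c • φ) p.1 p.2 = c * mat G X φ p.1 p.2
      unfold mat
      rw [Rep.smul_hom]
      rfl

theorem E_injective : Function.Injective (E G X) := by
  rw [← LinearMap.ker_eq_bot, LinearMap.ker_eq_bot']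
  intro φ hφ
  apply Rep.hom_ext
  rw [Rep.zero_hom]
  apply Representation.IntertwiningMap.ext
  apply MonoidAlgebra.lhom_ext'
  intro x
  apply LinearMap.ext_ring
  apply MonoidAlgebra.ext
  apply Finsupp.ext
  intro y
  have := congrFun hφ (Quotient.mk _ (x, y))
  simpa [E, mat, MonoidAlgebra.lsingle_apply] using (show mat G X φ x y = 0 from this)

noncomputable def Lmap (F : orbitRel.Quotient G (X × X) → ℂ) : MonoidAlgebra ℂ X →ₗ[ℂ] MonoidAlgebra ℂ X where
  toFun v := MonoidAlgebra.ofCoeff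
    (Finsupp.equivFunOnFinite.symm (fun y => ∑ x : X, v.coeff x * F (Quotient.mk _ (x, y))))
  map_add' v w := by ext y; simp [add_mul, Finset.sum_add_distrib]
  map_smul' c v := by ext y; simp [Finset.mul_sum, mul_assoc]

theorem Lmap_comm (F : orbitRel.Quotient G (X × X) → ℂ) (g : G) :
    (Lmap G X F).comp (Representation.ofMulAction ℂ G X g)
      = (Representation.ofMulAction ℂ G X g).comp (Lmap G X F) := by
  apply LinearMap.ext
  intro v
  apply MonoidAlgebra.ext
  apply Finsupp.ext
  intro y
  show (Lmap G X F (Representation.ofMulAction ℂ G X g v)).coeff y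
    = (Representation.ofMulAction ℂ G X g (Lmap G X F v)).coeff y
  rw [Representation.ofMulAction_apply]
  show Finsupp.equivFunOnFinite.symm
      (fun y => ∑ x : X, (Representation.ofMulAction ℂ G X g v).coeff x * F (Quotient.mk _ (x, y))) y
    = Finsupp.equivFunOnFinite.symm
      (fun y => ∑ x : X, v.coeff x * F (Quotient.mk _ (x, y))) (g⁻¹ • y)
  simp only [Finsupp.coe_equivFunOnFinite_symm]
  rw [← Equiv.sum_comp (MulAction.toPerm g⁻¹ : Equiv.Perm X)
    (fun x => v.coeff x * F (Quotient.mk _ (x, g⁻¹ • y)))]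
  refine Finset.sum_congr rfl fun x _ => ?_
  rw [Representation.ofMulAction_apply]
  show v.coeff (g⁻¹ • x) * F (Quotient.mk _ (x, y)) = v.coeff (g⁻¹ • x) * F (Quotient.mk _ (g⁻¹ • x, g⁻¹ • y))
  congr 1
  apply congrArg
  apply Quotient.sound
  refine ⟨g, ?_⟩
  show g • (g⁻¹ • x, g⁻¹ • y) = (x, y)
  simp [Prod.ext_iff]

theorem E_surjective : Function.Surjective (E G X) := by
  intro F
  classical
  refine ⟨Rep.ofHom ⟨Lmap G X F, fun g => Lmap_comm G X F g⟩, ?_⟩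
  funext q
  induction q using Quotient.inductionOn with
  | h p =>
    show Finsupp.equivFunOnFinite.symm (fun y =>
      ∑ x : X, (MonoidAlgebra.single p.1 1 : MonoidAlgebra ℂ X).coeff x * F (Quotient.mk _ (x, y))) p.2
        = F (Quotient.mk _ p)
    simp only [Finsupp.coe_equivFunOnFinite_symm]
    rw [Finset.sum_eq_single p.1]
    · simp [MonoidAlgebra.coeff_single]
    · intro x _ hx; simp [MonoidAlgebra.coeff_single, Finsupp.single_apply, Ne.symm hx]
    · simp

theorem finrank_hom : Module.finrank ℂ (Rep.ofMulAction ℂ G X ⟶ Rep.ofMulAction ℂ G X)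
    = Nat.card (orbitRel.Quotient G (X × X)) := by
  have : Finite (orbitRel.Quotient G (X × X)) := Quotient.finite _
  have := Fintype.ofFinite (orbitRel.Quotient G (X × X))
  rw [LinearEquiv.finrank_eq (LinearEquiv.ofBijective (E G X) ⟨E_injective G X, E_surjective G X⟩),
    Module.finrank_pi, Nat.card_eq_fintype_card]

end PartA

section PartB

variable {n k : ℕ}

theorem smul_val (σ : Perm (Fin n)) (s : Sym (Fin n) k) : (σ • s).1 = s.1.map σ := rfl

theorem count_smul (σ : Perm (Fin n)) (s : Sym (Fin n) k) (i : Fin n) :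
    (σ • s).1.count i = s.1.count (σ⁻¹ i) := by
  rw [smul_val]
  conv_lhs => rw [show i = σ (σ⁻¹ i) by simp]
  exact Multiset.count_map_eq_count' _ _ σ.injective _

/-- the pair-of-multiplicities function of a pair of multisets -/
def pairfun (p : Sym (Fin n) k × Sym (Fin n) k) : Fin n → ℕ × ℕ :=
  fun i => (p.1.1.count i, p.2.1.count i)

def prof (p : Sym (Fin n) k × Sym (Fin n) k) : Multiset (ℕ × ℕ) :=
  (Finset.univ.val.map (pairfun p)).filter (· ≠ (0, 0))

theorem pairfun_smul (σ : Perm (Fin n)) (p : Sym (Fin n) k × Sym (Fin n) k) (i : Fin n) :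
    pairfun (σ • p) i = pairfun p (σ⁻¹ i) := by
  show (((σ • p).1).1.count i, ((σ • p).2).1.count i) = _
  have h1 : (σ • p).1 = σ • p.1 := rfl
  have h2 : (σ • p).2 = σ • p.2 := rfl
  rw [h1, h2, count_smul, count_smul]
  rfl

theorem map_univ_perm (σ : Perm (Fin n)) :
    (Finset.univ.val : Multiset (Fin n)).map σ = Finset.univ.val := by
  have := Finset.map_univ_equiv (σ : Fin n ≃ Fin n)
  have := congrArg Finset.val this
  rwa [Finset.map_val] at this

theorem prof_smul (σ : Perm (Fin n)) (p : Sym (Fin n) k × Sym (Fin n) k) :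
    prof (σ • p) = prof p := by
  unfold prof
  congr 1
  have : pairfun (σ • p) = (pairfun p) ∘ (σ⁻¹ : Perm (Fin n)) := by
    funext i; exact pairfun_smul σ p i
  rw [this, ← Multiset.map_map, map_univ_perm]

theorem sum_count_univ (m : Multiset (Fin n)) :
    ∑ i : Fin n, m.count i = Multiset.card m := by
  rw [← Multiset.toFinset_sum_count_eq]
  refine (Finset.sum_subset (Finset.subset_univ _) ?_).symm
  intro x _ hx
  rw [Multiset.count_eq_zero]
  exact fun h => hx (Multiset.mem_toFinset.2 h)

theorem filter_map_sum (m : Multiset (ℕ × ℕ)) (g : ℕ × ℕ → ℕ) (hg : g (0,0) = 0) :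
    ((m.filter (· ≠ (0, 0))).map g).sum = (m.map g).sum := by
  conv_rhs => rw [← Multiset.filter_add_not (· ≠ (0,0)) m]
  rw [Multiset.map_add, Multiset.sum_add]
  have : ((Multiset.filter (fun a => ¬ a ≠ (0,0)) m).map g).sum = 0 := by
    apply Multiset.sum_eq_zero
    intro x hx
    obtain ⟨a, ha, rfl⟩ := Multiset.mem_map.1 hx
    have : a = (0,0) := not_not.1 (Multiset.mem_filter.1 ha).2
    rw [this, hg]
  omega

theorem map_pairfun_fst (p : Sym (Fin n) k × Sym (Fin n) k) :
    ((Finset.univ.val.map (pairfun p)).map Prod.fst).sum = k := by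
  rw [Multiset.map_map]
  have : (Prod.fst ∘ pairfun p) = fun i => p.1.1.count i := rfl
  rw [this]
  have : ((Finset.univ.val : Multiset (Fin n)).map (fun i => p.1.1.count i)).sum
      = ∑ i : Fin n, p.1.1.count i := rfl
  rw [this, sum_count_univ, p.1.2]

theorem map_pairfun_snd (p : Sym (Fin n) k × Sym (Fin n) k) :
    ((Finset.univ.val.map (pairfun p)).map Prod.snd).sum = k := by
  rw [Multiset.map_map]
  have : (Prod.snd ∘ pairfun p) = fun i => p.2.1.count i := rfl
  rw [this]
  have : ((Finset.univ.val : Multiset (Fin n)).map (fun i => p.2.1.count i)).sum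
      = ∑ i : Fin n, p.2.1.count i := rfl
  rw [this, sum_count_univ, p.2.2]

theorem prof_isBiPar (p : Sym (Fin n) k × Sym (Fin n) k) : IsBiPar k (prof p) := by
  refine ⟨?_, ?_, ?_⟩
  · intro h
    have := Multiset.of_mem_filter h
    simp at this
  · rw [prof, filter_map_sum _ _ rfl, map_pairfun_fst]
  · rw [prof, filter_map_sum _ _ rfl, map_pairfun_snd]


theorem count_fiber {β : Type} [DecidableEq β] (g : Fin n → β) (b : β) :
    Fintype.card {a // g a = b} = Multiset.count b (Finset.univ.val.map g) := by
  rw [Multiset.count_map, Fintype.card_subtype]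
  show Multiset.card (Finset.filter (fun a => g a = b) Finset.univ).val = _
  rw [Finset.filter_val]
  congr 1
  exact Multiset.filter_congr (fun x _ => eq_comm)

theorem exists_comp {β : Type} [DecidableEq β] (f f' : Fin n → β)
    (h : Finset.univ.val.map f = Finset.univ.val.map f') :
    ∃ σ : Perm (Fin n), ∀ i, f (σ i) = f' i := by
  have hc : ∀ b, Fintype.card {a // f' a = b} = Fintype.card {a // f a = b} := by
    intro b; rw [count_fiber, count_fiber, h]
  exact ⟨Equiv.ofFiberEquiv (fun b => Fintype.equivOfCardEq (hc b)),
    fun i => Equiv.ofFiberEquiv_map _ i⟩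

theorem map_pairfun_eq_of_prof (p q : Sym (Fin n) k × Sym (Fin n) k) (h : prof p = prof q) :
    Finset.univ.val.map (pairfun p) = Finset.univ.val.map (pairfun q) := by
  have key : ∀ r : Sym (Fin n) k × Sym (Fin n) k,
      Finset.univ.val.map (pairfun r)
        = prof r + Multiset.replicate (n - Multiset.card (prof r)) (0,0) := by
    intro r
    conv_lhs => rw [← Multiset.filter_add_not (· ≠ (0,0)) (Finset.univ.val.map (pairfun r))]
    congr 1
    rw [Multiset.eq_replicate]
    refine ⟨?_, fun x hx => not_not.1 (Multiset.mem_filter.1 hx).2⟩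
    have h2 := congrArg Multiset.card
      (Multiset.filter_add_not (· ≠ (0,0)) (Finset.univ.val.map (pairfun r)))
    rw [Multiset.card_add] at h2
    have h3 : Multiset.card (Finset.univ.val.map (pairfun r)) = n := by simp
    have h4 : Multiset.card (prof r)
        = Multiset.card (Multiset.filter (· ≠ (0,0)) (Finset.univ.val.map (pairfun r))) := rfl
    omega
  rw [key p, key q, h]

theorem rel_of_pairfun (p q : Sym (Fin n) k × Sym (Fin n) k) (σ : Perm (Fin n))
    (hσ : ∀ i, pairfun p (σ i) = pairfun q i) : σ⁻¹ • p = q := by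
  have hs : σ⁻¹ • p.1 = q.1 := by
    apply Subtype.ext
    apply Multiset.ext.2
    intro i
    have := count_smul σ⁻¹ p.1 i
    rw [inv_inv] at this
    rw [this]
    exact congrArg Prod.fst (hσ i)
  have ht : σ⁻¹ • p.2 = q.2 := by
    apply Subtype.ext
    apply Multiset.ext.2
    intro i
    have := count_smul σ⁻¹ p.2 i
    rw [inv_inv] at this
    rw [this]
    exact congrArg Prod.snd (hσ i)
  exact Prod.ext hs ht

noncomputable def Phi :
    orbitRel.Quotient (Perm (Fin n)) (Sym (Fin n) k × Sym (Fin n) k)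
      → {b : Multiset (ℕ × ℕ) // IsBiPar k b} :=
  Quotient.lift (fun p => ⟨prof p, prof_isBiPar p⟩) (by
    intro p q h
    obtain ⟨σ, rfl⟩ := h
    exact Subtype.ext (prof_smul σ q))

theorem Phi_injective : Function.Injective (Phi (n := n) (k := k)) := by
  intro a b
  induction a using Quotient.inductionOn with | h p => ?_
  induction b using Quotient.inductionOn with | h q => ?_
  intro h
  have hprof : prof p = prof q := congrArg Subtype.val h
  obtain ⟨σ, hσ⟩ := exists_comp (pairfun p) (pairfun q) (map_pairfun_eq_of_prof p q hprof)
  refine Quotient.sound ⟨σ, ?_⟩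
  show σ • q = p
  rw [← rel_of_pairfun p q σ hσ, smul_inv_smul]


theorem Phi_surjective (hn : 2 * k ≤ n) :
    Function.Surjective (Phi (n := n) (k := k)) := by
  rintro ⟨b, hb0, hb1, hb2⟩
  have hone : ∀ e ∈ b, (fun _ : ℕ × ℕ => 1) e ≤ (fun e : ℕ × ℕ => e.1 + e.2) e := by
    intro e he
    show 1 ≤ e.1 + e.2
    by_contra hlt
    have h1 : e = (0, 0) := by
      obtain ⟨e1, e2⟩ := e
      simp only [Prod.mk.injEq]
      omega
    exact hb0 (h1 ▸ he)
  have hcard : Multiset.card b ≤ 2 * k := by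
    calc Multiset.card b = (b.map (fun _ => 1)).sum := by
          rw [Multiset.map_const', Multiset.sum_replicate, smul_eq_mul, mul_one]
      _ ≤ (b.map (fun e => e.1 + e.2)).sum := Multiset.sum_map_le_sum_map _ _ hone
      _ = (b.map Prod.fst).sum + (b.map Prod.snd).sum := by
          rw [← Multiset.sum_map_add]
      _ = 2 * k := by rw [hb1, hb2]; ring
  have hbn : Multiset.card b ≤ n := le_trans hcard hn
  set l := b.toList with hl
  have hlen : l.length = Multiset.card b := Multiset.length_toList b
  set f : Fin n → ℕ × ℕ := fun i => l.getD i (0, 0) with hf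
  have key : Finset.univ.val.map f = b + Multiset.replicate (n - Multiset.card b) (0, 0) := by
    have huniv : (Finset.univ.val : Multiset (Fin n)) = ↑(List.finRange n) := rfl
    rw [huniv, Multiset.map_coe]
    have hlist : List.map f (List.finRange n) = l ++ List.replicate (n - l.length) (0, 0) := by
      apply List.ext_getElem
      · simp only [List.length_map, List.length_finRange, List.length_append,
          List.length_replicate]
        omega
      · intro j h1 h2
        rw [List.getElem_map, List.getElem_finRange, List.getElem_append]
        have hval : ((Fin.cast (List.length_finRange (n := n)) ⟨j, by simpa using h1⟩ : Fin n) : ℕ)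
          = j := rfl
        split
        · next h' =>
            show l.getD _ (0,0) = _
            rw [hval, List.getD_eq_getElem l (0,0) h']
        · next h' =>
            rw [List.getElem_replicate]
            show l.getD _ (0,0) = _
            rw [hval]
            exact l.getD_eq_default _ (le_of_not_gt h')
    rw [hlist]
    show ((l : Multiset (ℕ×ℕ)) + ↑(List.replicate (n - l.length) (0,0))) = _
    rw [Multiset.coe_replicate, hl, Multiset.coe_toList, hlen]
  have hcount : ∀ (g : ℕ × ℕ → ℕ) (j : Fin n),
      Multiset.count j (Finset.univ.val.bind (fun i => Multiset.replicate (g (f i)) i))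
        = g (f j) := by
    intro g j
    rw [Multiset.count_bind]
    have h5 : (Finset.univ.val.map
        (fun i => Multiset.count j (Multiset.replicate (g (f i)) i))).sum
        = ∑ i : Fin n, Multiset.count j (Multiset.replicate (g (f i)) i) := rfl
    rw [h5, Finset.sum_eq_single j]
    · rw [Multiset.count_replicate_self]
    · intro i _ hij; rw [Multiset.count_replicate, if_neg hij]
    · simp
  have hcardbind : ∀ g : ℕ × ℕ → ℕ,
      Multiset.card (Finset.univ.val.bind (fun i => Multiset.replicate (g (f i)) i))
        = ((Finset.univ.val.map f).map g).sum := by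
    intro g
    rw [Multiset.card_bind, Multiset.map_map]
    refine congrArg Multiset.sum (Multiset.map_congr rfl ?_)
    intro i _
    simp [Function.comp]
  have hsum : ∀ g : ℕ × ℕ → ℕ, g (0,0) = 0 → (b.map g).sum = k →
      ((Finset.univ.val.map f).map g).sum = k := by
    intro g hg0 hgb
    rw [key, Multiset.map_add, Multiset.sum_add, hgb, Multiset.map_replicate, hg0,
      Multiset.sum_replicate, smul_eq_mul, mul_zero]
    omega
  have hs : Multiset.card (Finset.univ.val.bind (fun i => Multiset.replicate (f i).1 i)) = k := by
    rw [hcardbind Prod.fst]; exact hsum Prod.fst rfl hb1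
  have ht : Multiset.card (Finset.univ.val.bind (fun i => Multiset.replicate (f i).2 i)) = k := by
    rw [hcardbind Prod.snd]; exact hsum Prod.snd rfl hb2
  refine ⟨Quotient.mk _ ((⟨_, hs⟩ : Sym (Fin n) k), (⟨_, ht⟩ : Sym (Fin n) k)), Subtype.ext ?_⟩
  show prof ((⟨_, hs⟩ : Sym (Fin n) k), (⟨_, ht⟩ : Sym (Fin n) k)) = b
  have hpair : pairfun ((⟨_, hs⟩ : Sym (Fin n) k), (⟨_, ht⟩ : Sym (Fin n) k)) = f := by
    funext i
    show (Multiset.count i _, Multiset.count i _) = f i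
    rw [hcount Prod.fst i, hcount Prod.snd i]
  rw [prof, hpair, key, Multiset.filter_add]
  have h6 : Multiset.filter (· ≠ (0,0)) b = b :=
    Multiset.filter_eq_self.2 (fun a ha h => hb0 (h ▸ ha))
  have h7 : Multiset.filter (· ≠ (0,0))
      (Multiset.replicate (n - Multiset.card b) ((0,0) : ℕ × ℕ)) = 0 :=
    Multiset.filter_eq_nil.2 (fun a ha => not_not.2 (Multiset.eq_of_mem_replicate ha))
  rw [h6, h7, add_zero]

theorem card_orbit (hn : 2 * k ≤ n) :
    Nat.card (orbitRel.Quotient (Perm (Fin n)) (Sym (Fin n) k × Sym (Fin n) k)) = bp k :=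
  Nat.card_eq_of_bijective _ ⟨Phi_injective, Phi_surjective hn⟩

end PartB

/-- The dimension of the algebra of `ℂ[S_n]`-module endomorphisms of `Sym^k V_n`
(realized as the permutation representation on its monomial basis, indexed by size-`k`
multisets over `Fin n`) equals the number of bipartite partitions of `k`. -/
theorem stmt7 (n k : ℕ) (hk : 1 ≤ k) (hn : 2 * k ≤ n) :
    Module.finrank ℂ (Rep.ofMulAction ℂ (Equiv.Perm (Fin n)) (Sym (Fin n) k) ⟶
      Rep.ofMulAction ℂ (Equiv.Perm (Fin n)) (Sym (Fin n) k)) = bp k := by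
  rw [finrank_hom (Equiv.Perm (Fin n)) (Sym (Fin n) k), card_orbit hn]

end SP
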